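/- Let R = 𝔬/𝔭^ℓ with π a generator of 𝔭, and 0 ≤ r ≤ ℓ-1. Then the sum of χ(π^r) over all characters χ ∈ R̂ with v̂(χ) = r equals -q^r. -/

import Mathlib

open scoped BigOperators

/-- The image in `R = 𝔬/𝔭^ℓ` of the ideal `𝔭^r`. -/
def idealImage (O : Type) [CommRing O] (π : O) (ℓ r : ℕ) :
    Ideal (O ⧸ (Ideal.span {π} ^ ℓ)) :=
  Ideal.map (Ideal.Quotient.mk (Ideal.span {π} ^ ℓ)) (Ideal.span {π} ^ r)

/-- The set of characters `χ` of `R = 𝔬/𝔭^ℓ` with dual valuation `v̂(χ) = r`. -/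
def dualLevel (O : Type) [CommRing O] (π : O) (ℓ r : ℕ) :
    Set (AddChar (O ⧸ (Ideal.span {π} ^ ℓ)) ℂ) :=
  {χ | (∀ a ∈ idealImage O π ℓ (r + 1), χ a = 1) ∧ ∃ a ∈ idealImage O π ℓ r, χ a ≠ 1}

open Function in
noncomputable def liftChar {R : Type*} [CommRing R] (I : Ideal R)
    (χ : AddChar R ℂ) (h : ∀ a ∈ I, χ a = 1) : AddChar (R ⧸ I) ℂ := by
  have hcong : ∀ u v : R, Ideal.Quotient.mk I u = Ideal.Quotient.mk I v → χ u = χ v := by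
    intro u v huv
    have hmem : u - v ∈ I := (Ideal.Quotient.eq).mp huv
    calc χ u = χ (v + (u - v)) := by ring_nf
    _ = χ v * χ (u - v) := AddChar.map_add_eq_mul χ v (u - v)
    _ = χ v := by rw [h _ hmem, mul_one]
  let s : (R ⧸ I) → R := surjInv Ideal.Quotient.mk_surjective
  have hs : ∀ x, Ideal.Quotient.mk I (s x) = x := surjInv_eq Ideal.Quotient.mk_surjective
  exact
  { toFun := fun x => χ (s x)
    map_zero_eq_one' := by
      have h0 : χ (s 0) = χ 0 := hcong _ _ (by rw [hs]; simp)
      show χ (s 0) = 1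
      rw [h0, AddChar.map_zero_eq_one]
    map_add_eq_mul' := by
      intro a b
      have hab : χ (s (a + b)) = χ (s a + s b) := hcong _ _ (by rw [hs]; simp [hs])
      show χ (s (a + b)) = χ (s a) * χ (s b)
      rw [hab, AddChar.map_add_eq_mul] }

open Classical in
lemma sum_char_trivial {R : Type*} [CommRing R] [Finite R] (I : Ideal R) (x : R) :
    ∑ᶠ χ ∈ {χ : AddChar R ℂ | ∀ a ∈ I, χ a = 1}, χ x
      = if x ∈ I then (Nat.card (R ⧸ I) : ℂ) else 0 := by
  classical
  have hfinR : Finite (R ⧸ I) := Finite.of_surjective _ Ideal.Quotient.mk_surjective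
  cases nonempty_fintype (R ⧸ I)
  let e : AddChar (R ⧸ I) ℂ → AddChar R ℂ :=
    fun ψ => ψ.compAddMonoidHom (Ideal.Quotient.mk I).toAddMonoidHom
  have he : Function.Injective e :=
    AddChar.compAddMonoidHom_injective_left _ Ideal.Quotient.mk_surjective
  have himg : {χ : AddChar R ℂ | ∀ a ∈ I, χ a = 1}
      = ↑(Finset.image e Finset.univ) := by
    apply Set.ext
    intro χ
    simp only [Set.mem_setOf_eq, Finset.coe_image, Finset.coe_univ, Set.image_univ,
      Set.mem_range]
    constructor
    · intro h
      refine ⟨liftChar I χ h, ?_⟩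
      ext a
      show liftChar I χ h (Ideal.Quotient.mk I a) = χ a
      unfold liftChar
      simp only [AddChar.coe_mk]
      have hmem : Function.surjInv (Ideal.Quotient.mk_surjective (I := I))
          (Ideal.Quotient.mk I a) - a ∈ I := by
        rw [← Ideal.Quotient.eq]
        exact Function.surjInv_eq Ideal.Quotient.mk_surjective _
      calc χ (Function.surjInv Ideal.Quotient.mk_surjective (Ideal.Quotient.mk I a))
          = χ (a + (Function.surjInv (Ideal.Quotient.mk_surjective (I := I))
              (Ideal.Quotient.mk I a) - a)) := by ring_nf
        _ = χ a * χ _ := AddChar.map_add_eq_mul χ _ _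
        _ = χ a := by rw [h _ hmem, mul_one]
    · rintro ⟨ψ, rfl⟩ a ha
      show ψ (Ideal.Quotient.mk I a) = 1
      rw [Ideal.Quotient.eq_zero_iff_mem.mpr ha, AddChar.map_zero_eq_one]
  rw [himg, finsum_mem_coe_finset, Finset.sum_image (fun a _ b _ h => he h)]
  have hev : ∀ ψ : AddChar (R ⧸ I) ℂ, e ψ x = ψ (Ideal.Quotient.mk I x) := fun ψ => rfl
  simp_rw [hev]
  rw [AddChar.sum_apply_eq_ite]
  rw [Nat.card_eq_fintype_card]
  congr 1
  simp [Ideal.Quotient.eq_zero_iff_mem]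

/-- `Σ_{χ ∈ R̂_r} χ(π^r) = -q^r` for `0 ≤ r ≤ ℓ-1`. -/
theorem stmt_7 (O : Type) [CommRing O] [IsDomain O] [IsDiscreteValuationRing O]
    (π : O) (hπ : Irreducible π) (q ℓ : ℕ)
    [Finite (O ⧸ Ideal.span {π})] (hq : Nat.card (O ⧸ Ideal.span {π}) = q)
    (r : ℕ) (hr : r ≤ ℓ - 1) (hℓ : 1 ≤ ℓ) :
    ∑ᶠ χ ∈ dualLevel O π ℓ r, χ (Ideal.Quotient.mk (Ideal.span {π} ^ ℓ) (π ^ r)) =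
      -(q : ℂ) ^ r := by
  have hπp : Prime π := irreducible_iff_prime.mp hπ
  classical
  set P : Ideal O := Ideal.span {π} with hP
  have hrℓ : r + 1 ≤ ℓ := by omega
  have hPbot : P ≠ ⊥ := by
    rw [hP, Ne, Ideal.span_singleton_eq_bot]; exact hπ.ne_zero
  have hPprime : P.IsPrime :=
    (Ideal.span_singleton_prime hπ.ne_zero).mpr hπp
  have hcard : ∀ s : ℕ, Nat.card (O ⧸ P ^ s) = q ^ s := by
    intro s
    have h1 := cardQuot_pow_of_prime (S := O) (P := P) hPbot (i := s)
    rw [Submodule.cardQuot_apply, Submodule.cardQuot_apply, hq] at h1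
    exact h1
  have hq1 : 1 ≤ q := by
    rw [← hq]
    exact Nat.one_le_iff_ne_zero.mpr (Nat.card_ne_zero.mpr ⟨⟨0⟩, ‹_›⟩)
  have hfinR : Finite (O ⧸ P ^ ℓ) := by
    apply Nat.finite_of_card_ne_zero
    rw [hcard]
    positivity
  -- the element
  set x : O ⧸ P ^ ℓ := Ideal.Quotient.mk (P ^ ℓ) (π ^ r) with hx
  -- membership facts
  have hmem_r : x ∈ idealImage O π ℓ r :=
    Ideal.mem_map_of_mem _ (Ideal.pow_mem_pow (Ideal.mem_span_singleton_self π) r)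
  have hnotpow : π ^ r ∉ P ^ (r + 1) := by
    rw [hP, Ideal.span_singleton_pow, Ideal.mem_span_singleton]
    rintro ⟨c, hc⟩
    have h1 : π ^ r * 1 = π ^ r * (π * c) := by
      conv_lhs => rw [mul_one, hc]
      rw [pow_succ]; ring
    have h2 := mul_left_cancel₀ (pow_ne_zero r hπ.ne_zero) h1
    exact hπ.not_isUnit (IsUnit.of_mul_eq_one _ h2.symm)
  have hnotmem : x ∉ idealImage O π ℓ (r + 1) := by
    intro h
    rw [idealImage, Ideal.mem_map_iff_of_surjective _ Ideal.Quotient.mk_surjective] at h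
    obtain ⟨a, ha, hax⟩ := h
    have hsub : a - π ^ r ∈ P ^ ℓ := (Ideal.Quotient.eq).mp hax
    have : π ^ r ∈ P ^ (r + 1) := by
      have : π ^ r = a - (a - π ^ r) := by ring
      rw [this]
      exact Ideal.sub_mem _ ha (Ideal.pow_le_pow_right hrℓ hsub)
    exact hnotpow this
  -- T sets
  set T : ℕ → Set (AddChar (O ⧸ P ^ ℓ) ℂ) :=
    fun s => {χ | ∀ a ∈ idealImage O π ℓ s, χ a = 1} with hT
  have hTsub : T r ⊆ T (r + 1) := by
    intro χ hχ a ha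
    exact hχ a (Ideal.map_mono (Ideal.pow_le_pow_right (Nat.le_succ r)) ha)
  have hdual : dualLevel O π ℓ r = T (r + 1) \ T r := by
    apply Set.ext
    intro χ
    simp [dualLevel, hT, Set.mem_diff, Set.mem_setOf_eq, not_forall]
    exact ⟨fun ⟨h1, a, ha, h2⟩ => ⟨h1, fun h => h2 (h a ha)⟩,
      fun ⟨h1, h2⟩ => ⟨h1, by by_contra hc; push_neg at hc; exact h2 hc⟩⟩
  -- sums over T s
  have hsum : ∀ s : ℕ, s ≤ ℓ →
      ∑ᶠ χ ∈ T s, χ x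
        = if x ∈ idealImage O π ℓ s then ((q : ℂ) ^ s) else 0 := by
    intro s hs
    rw [hT]
    rw [sum_char_trivial (idealImage O π ℓ s) x]
    congr 1
    have hle : P ^ ℓ ≤ P ^ s := Ideal.pow_le_pow_right hs
    have hcongr : Nat.card ((O ⧸ P ^ ℓ) ⧸ idealImage O π ℓ s) = Nat.card (O ⧸ P ^ s) :=
      Nat.card_congr (DoubleQuot.quotQuotEquivQuotOfLE hle).toEquiv
    rw [hcongr, hcard s]
    push_cast
    ring
  -- finiteness of the sets
  have hfinT : ∀ s, (T s).Finite := fun s => Set.toFinite _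
  have hfinD : (T (r + 1) \ T r).Finite := Set.Finite.subset (hfinT (r + 1)) Set.diff_subset
  -- split the sum
  have hunion : (T (r + 1) \ T r) ∪ T r = T (r + 1) := Set.diff_union_of_subset hTsub
  have hsplit := finsum_mem_union (f := fun χ : AddChar (O ⧸ P ^ ℓ) ℂ => χ x)
    Set.disjoint_sdiff_left hfinD (hfinT r)
  rw [hunion] at hsplit
  rw [hdual]
  have h1 : ∑ᶠ χ ∈ T (r + 1), χ x = 0 := by
    rw [hsum (r + 1) hrℓ, if_neg hnotmem]
  have h2 : ∑ᶠ χ ∈ T r, χ x = (q : ℂ) ^ r := by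
    rw [hsum r (by omega), if_pos hmem_r]
  rw [h1, h2] at hsplit
  linear_combination -hsplit
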